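/- Let p₀ ∈ ℂ, let h be a holomorphic function on an open neighborhood V of p₀ with h(p₀) = 0 and h not identically zero, and let μ > 1 be a real number. Then every piecewise C¹ curve γ : [0,1) → V ∖ {z : h(z) = 0} with γ(t) → p₀ as t → 1 satisfies ∫₀¹ |h(γ(t))|^{−μ} |γ'(t)| dt = ∞. (This is the step in the proof of the main curvature estimate showing that a curve of finite length in the auxiliary flat metric dσ² = |g'|^{−2λ/(1−λ)} w |dz|², with λ/(1−λ) > 1, cannot converge to a zero of g', and hence is divergent in the original surface.) -/

import Mathlib

noncomputable section

/-- `γ` is piecewise C¹ on `[0,1)`: continuous, and differentiable off a countable set. -/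
def PiecewiseC1 (γ : ℝ → ℂ) : Prop :=
  ContinuousOn γ (Set.Ico 0 1) ∧
    ∃ s : Set ℝ, s.Countable ∧ ∀ t ∈ Set.Ico (0:ℝ) 1 \ s, DifferentiableAt ℝ γ t

/-- if `h` is holomorphic near `p₀`, `h(p₀) = 0`, `h ≢ 0`, and `μ > 1`,
then every piecewise C¹ curve in `V ∖ {h = 0}` converging to `p₀` has infinite length
in the metric `|h|^{-2μ}|dz|²`. -/
theorem infinite_length_to_zero (p₀ : ℂ) (V : Set ℂ) (hV : IsOpen V) (hp₀ : p₀ ∈ V)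
    (h : ℂ → ℂ) (hh : DifferentiableOn ℂ h V) (h0 : h p₀ = 0)
    (hne : ¬ ∀ z ∈ V, h z = 0) (μ : ℝ) (hμ : 1 < μ)
    (γ : ℝ → ℂ) (hγ : PiecewiseC1 γ)
    (hγV : ∀ t ∈ Set.Ico (0:ℝ) 1, γ t ∈ V ∧ h (γ t) ≠ 0)
    (hlim : Filter.Tendsto γ (nhdsWithin 1 (Set.Iio 1)) (nhds p₀)) :
    ∫⁻ t in Set.Ioo (0:ℝ) 1, ENNReal.ofReal (‖h (γ t)‖ ^ (-μ) * ‖deriv γ t‖) = ⊤ := by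
  obtain ⟨hγc, s, hs, hγd⟩ := hγ
  by_contra hI
  set I : ENNReal := ∫⁻ t in Set.Ioo (0:ℝ) 1, ENNReal.ofReal (‖h (γ t)‖ ^ (-μ) * ‖deriv γ t‖)
    with hIdef
  clear_value I
  -- bound ‖h z‖ ≤ M ‖z - p₀‖ near p₀
  have hd : DifferentiableAt ℂ h p₀ := hh.differentiableAt (hV.mem_nhds hp₀)
  have hbig : (fun z => h z) =O[nhds p₀] fun z => z - p₀ := by
    simpa [h0] using hd.isBigO_sub
  obtain ⟨c, hc⟩ := hbig.bound
  obtain ⟨δ, hδpos, hδ⟩ := Metric.eventually_nhds_iff_ball.mp hc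
  set M : ℝ := max c 1 with hMdef
  have hM1 : (1:ℝ) ≤ M := le_max_right _ _
  have hM0 : 0 < M := lt_of_lt_of_le one_pos hM1
  have hMb : ∀ z ∈ Metric.ball p₀ δ, ‖h z‖ ≤ M * ‖z - p₀‖ := by
    intro z hz
    refine (hδ z hz).trans ?_
    have := norm_nonneg (z - p₀)
    nlinarith [le_max_left c 1]
  -- choose a
  have hball : ∀ᶠ t in nhdsWithin 1 (Set.Iio 1), γ t ∈ Metric.ball p₀ δ :=
    hlim (Metric.ball_mem_nhds p₀ hδpos)
  obtain ⟨a₀, ha₀, ha₀'⟩ := mem_nhdsLT_iff_exists_Ioo_subset.mp hball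
  set a : ℝ := (max a₀ 0 + 1) / 2 with hadef
  have ha₀1 : max a₀ 0 < 1 := max_lt ha₀ one_pos
  have ha01 : max a₀ 0 < a := by rw [hadef]; linarith
  have ha1 : a < 1 := by rw [hadef]; linarith
  have ha0 : 0 ≤ a := le_trans (le_max_right a₀ 0) ha01.le
  have haIoo : ∀ t, a ≤ t → t < 1 → γ t ∈ Metric.ball p₀ δ := fun t h1 h2 =>
    ha₀' ⟨lt_of_lt_of_le (lt_of_le_of_lt (le_max_left a₀ 0) ha01) h1, h2⟩
  -- r
  set r : ℝ → ℝ := fun t => ‖γ t - p₀‖ with hrdef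
  have hr0 : ∀ t ∈ Set.Ico (0:ℝ) 1, 0 < r t := by
    intro t ht
    have h1 := (hγV t ht).2
    have h2 : γ t ≠ p₀ := fun e => h1 (by rw [e, h0])
    simpa [hrdef, sub_eq_zero] using h2
  have hra : 0 < r a := hr0 a ⟨ha0, ha1⟩
  clear_value r
  -- choose ε
  set A : ℝ := (2 * M) ^ μ * (I.toReal + 1) with hAdef
  have hA0 : 0 < A := by
    have := ENNReal.toReal_nonneg (a := I)
    have h2M : (0:ℝ) < (2*M) ^ μ := Real.rpow_pos_of_pos (by linarith) μ
    nlinarith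
  clear_value A
  set B : ℝ := (A + 1) ^ (1 / (1 - μ)) with hBdef
  have hB0 : 0 < B := Real.rpow_pos_of_pos (by linarith) _
  clear_value B
  set ε : ℝ := min (r a / 2) B with hεdef
  have hε0 : 0 < ε := lt_min (by linarith) hB0
  have hεra : 2 * ε ≤ r a := by
    have := min_le_left (r a / 2) B
    rw [hεdef]; linarith
  have hεB : ε ≤ B := min_le_right _ _
  clear_value ε
  have hεpow : A + 1 ≤ ε ^ (1 - μ) := by
    have h1 : B ^ (1 - μ) ≤ ε ^ (1 - μ) :=
      Real.rpow_le_rpow_of_nonpos hε0 hεB (by linarith)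
    have h2 : B ^ (1 - μ) = A + 1 := by
      rw [hBdef, ← Real.rpow_mul (by linarith : (0:ℝ) ≤ A + 1), one_div,
        inv_mul_cancel₀ (by intro hz; linarith : (1:ℝ) - μ ≠ 0), Real.rpow_one]
    rw [← h2]; exact h1
  -- choose t₀
  have hball2 : ∀ᶠ t in nhdsWithin 1 (Set.Iio 1), γ t ∈ Metric.ball p₀ ε :=
    hlim (Metric.ball_mem_nhds p₀ hε0)
  obtain ⟨a₁, ha₁, ha₁'⟩ := mem_nhdsLT_iff_exists_Ioo_subset.mp hball2
  set t₀ : ℝ := (max a₁ a + 1) / 2 with ht₀def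
  have ha₁1 : max a₁ a < 1 := max_lt ha₁ ha1
  have hat₀ : a < t₀ := lt_of_le_of_lt (le_max_right a₁ a) (by rw [ht₀def]; linarith)
  have ht₀1 : t₀ < 1 := by rw [ht₀def]; linarith
  have hrt₀ : r t₀ < ε := by
    have : γ t₀ ∈ Metric.ball p₀ ε :=
      ha₁' ⟨lt_of_le_of_lt (le_max_left a₁ a) (by rw [ht₀def]; linarith), ht₀1⟩
    simpa [hrdef, Metric.mem_ball, dist_eq_norm] using this
  have hIccsub : Set.Icc a t₀ ⊆ Set.Ico (0:ℝ) 1 := fun t ht =>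
    ⟨le_trans ha0 ht.1, lt_of_le_of_lt ht.2 ht₀1⟩
  have hrc : ContinuousOn r (Set.Icc a t₀) := by
    rw [hrdef]
    exact ((hγc.mono hIccsub).sub continuousOn_const).norm
  -- b := sInf S
  set S : Set ℝ := Set.Icc a t₀ ∩ r ⁻¹' Set.Iic ε with hSdef
  have hScl : IsClosed S := hrc.preimage_isClosed_of_isClosed isClosed_Icc isClosed_Iic
  have hSne : S.Nonempty := ⟨t₀, ⟨hat₀.le, le_refl _⟩, hrt₀.le⟩
  have hSbdd : BddBelow S := (bddBelow_Icc (a := t₀) (b := a)).mono Set.inter_subset_left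
  set b : ℝ := sInf S with hbdef
  have hbS : b ∈ S := hScl.csInf_mem hSne hSbdd
  have hrb : r b ≤ ε := hbS.2
  have hab : a < b := by
    rcases lt_or_eq_of_le hbS.1.1 with h1 | h1
    · exact h1
    · exfalso; rw [← h1] at hrb; linarith
  have hbt₀ : b ≤ t₀ := hbS.1.2
  have hb1 : b < 1 := lt_of_le_of_lt hbt₀ ht₀1
  -- a' := sSup T
  set T : Set ℝ := Set.Icc a b ∩ r ⁻¹' Set.Ici (2 * ε) with hTdef
  have hTcl : IsClosed T :=
    (hrc.mono (Set.Icc_subset_Icc_right hbt₀)).preimage_isClosed_of_isClosed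
      isClosed_Icc isClosed_Ici
  have hTne : T.Nonempty := ⟨a, ⟨le_refl _, hab.le⟩, hεra⟩
  have hTbdd : BddAbove T := (bddAbove_Icc (a := a) (b := b)).mono Set.inter_subset_left
  set a' : ℝ := sSup T with ha'def
  have ha'T : a' ∈ T := hTcl.csSup_mem hTne hTbdd
  have hra' : 2 * ε ≤ r a' := ha'T.2
  have haa' : a ≤ a' := ha'T.1.1
  have ha'b : a' < b := by
    rcases lt_or_eq_of_le ha'T.1.2 with h1 | h1
    · exact h1
    · exfalso; rw [h1] at hra'; linarith
  have hupper : ∀ t ∈ Set.Ioo a' b, r t < 2 * ε := by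
    intro t ht
    by_contra hcon
    have : t ∈ T := ⟨⟨le_trans haa' ht.1.le, ht.2.le⟩, not_lt.mp hcon⟩
    exact absurd (le_csSup hTbdd this) (not_le.mpr ht.1)
  have hIoosub : Set.Ioo a' b ⊆ Set.Ico (0:ℝ) 1 := fun t ht =>
    ⟨le_trans (le_trans ha0 haa') ht.1.le, lt_trans ht.2 hb1⟩
  -- pointwise bounds
  set c₀ : ℝ := M * (2 * ε) with hc₀def
  have hc₀0 : 0 < c₀ := by rw [hc₀def]; positivity
  clear_value c₀
  have hkey : ∀ t ∈ Set.Ioo a' b,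
      c₀ ^ (-μ) * ‖deriv γ t‖ ≤ ‖h (γ t)‖ ^ (-μ) * ‖deriv γ t‖ ∧
      ‖deriv γ t‖ ≤ c₀ ^ μ * (‖h (γ t)‖ ^ (-μ) * ‖deriv γ t‖) := by
    intro t ht
    have ht' : t ∈ Set.Ico (0:ℝ) 1 := hIoosub ht
    have hpos : 0 < ‖h (γ t)‖ := norm_pos_iff.mpr (hγV t ht').2
    have hb1' : ‖h (γ t)‖ ≤ M * r t := by
      rw [hrdef]
      exact hMb _ (haIoo t (le_trans haa' ht.1.le) ht'.2)
    have hb2 : ‖h (γ t)‖ ≤ c₀ := by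
      have := hupper t ht
      rw [hc₀def]; nlinarith
    have key1 : c₀ ^ (-μ) ≤ ‖h (γ t)‖ ^ (-μ) :=
      Real.rpow_le_rpow_of_nonpos hpos hb2 (by linarith)
    constructor
    · exact mul_le_mul_of_nonneg_right key1 (norm_nonneg _)
    · have h1 : c₀ ^ μ * c₀ ^ (-μ) = 1 := by
        rw [← Real.rpow_add hc₀0]; simp
      have h2 : 0 < c₀ ^ μ := Real.rpow_pos_of_pos hc₀0 μ
      calc ‖deriv γ t‖ = c₀ ^ μ * (c₀ ^ (-μ) * ‖deriv γ t‖) := by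
            rw [← mul_assoc, h1, one_mul]
        _ ≤ c₀ ^ μ * (‖h (γ t)‖ ^ (-μ) * ‖deriv γ t‖) :=
            mul_le_mul_of_nonneg_left
              (mul_le_mul_of_nonneg_right key1 (norm_nonneg _)) h2.le
  -- the restricted integral
  set J : ENNReal := ∫⁻ t in Set.Ioo a' b, ENNReal.ofReal ‖deriv γ t‖ with hJdef
  have hIJ : ∫⁻ t in Set.Ioo a' b, ENNReal.ofReal (‖h (γ t)‖ ^ (-μ) * ‖deriv γ t‖) ≤ I := by
    rw [hIdef]
    exact MeasureTheory.lintegral_mono_set (fun t ht =>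
      ⟨lt_of_le_of_lt (le_trans ha0 haa') ht.1, lt_trans ht.2 hb1⟩)
  have hJle : J ≤ ENNReal.ofReal (c₀ ^ μ) * I := by
    have step : J ≤ ∫⁻ t in Set.Ioo a' b,
        ENNReal.ofReal (c₀ ^ μ * (‖h (γ t)‖ ^ (-μ) * ‖deriv γ t‖)) := by
      refine MeasureTheory.lintegral_mono_ae ?_
      refine (MeasureTheory.ae_restrict_iff' measurableSet_Ioo).mpr (Filter.Eventually.of_forall ?_)
      intro t ht
      exact ENNReal.ofReal_le_ofReal (hkey t ht).2
    refine step.trans ?_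
    have : ∀ t, ENNReal.ofReal (c₀ ^ μ * (‖h (γ t)‖ ^ (-μ) * ‖deriv γ t‖)) =
        ENNReal.ofReal (c₀ ^ μ) * ENNReal.ofReal (‖h (γ t)‖ ^ (-μ) * ‖deriv γ t‖) := fun t =>
      ENNReal.ofReal_mul (le_of_lt (Real.rpow_pos_of_pos hc₀0 μ))
    simp_rw [this]
    rw [MeasureTheory.lintegral_const_mul' _ _ ENNReal.ofReal_ne_top]
    exact mul_le_mul_right hIJ _
  have hIne : I ≠ ⊤ := hI
  have hJne : J ≠ ⊤ :=
    ne_top_of_le_ne_top (ENNReal.mul_ne_top ENNReal.ofReal_ne_top hIne) hJle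
  -- integrability of deriv γ on Ioc a' b
  have hintIoo : MeasureTheory.IntegrableOn (deriv γ) (Set.Ioo a' b) := by
    constructor
    · exact (measurable_deriv γ).aestronglyMeasurable
    · rw [MeasureTheory.hasFiniteIntegral_iff_norm]
      exact lt_of_le_of_ne le_top hJne
  have hintIoc : MeasureTheory.IntegrableOn (deriv γ) (Set.Ioc a' b) :=
    hintIoo.congr_set_ae (MeasureTheory.Ioo_ae_eq_Ioc (a := a') (b := b)).symm
  have hInt : IntervalIntegrable (deriv γ) MeasureTheory.volume a' b :=
    (intervalIntegrable_iff_integrableOn_Ioc_of_le ha'b.le).mpr hintIoc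
  -- FTC
  have hFTC : ∫ x in a'..b, deriv γ x = γ b - γ a' := by
    apply MeasureTheory.integral_eq_of_hasDerivAt_off_countable_of_le γ (deriv γ)
      ha'b.le hs
    · exact hγc.mono (fun t ht => ⟨le_trans (le_trans ha0 haa') ht.1, lt_of_le_of_lt ht.2 hb1⟩)
    · intro x hx
      exact (hγd x ⟨hIoosub hx.1, hx.2⟩).hasDerivAt
    · exact hInt
  -- displacement bound
  have hdisp : ε ≤ ‖γ b - γ a'‖ := by
    have h1 : ‖γ a' - p₀‖ - ‖γ b - p₀‖ ≤ ‖γ a' - p₀ - (γ b - p₀)‖ := norm_sub_norm_le _ _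
    have h2 : γ a' - p₀ - (γ b - p₀) = -(γ b - γ a') := by ring
    rw [h2, norm_neg] at h1
    have h3 : r a' = ‖γ a' - p₀‖ := by rw [hrdef]
    have h4 : r b = ‖γ b - p₀‖ := by rw [hrdef]
    linarith
  have hnormint : ε ≤ ∫ x in a'..b, ‖deriv γ x‖ := by
    calc ε ≤ ‖γ b - γ a'‖ := hdisp
    _ = ‖∫ x in a'..b, deriv γ x‖ := by rw [hFTC]
    _ ≤ ∫ x in a'..b, ‖deriv γ x‖ := intervalIntegral.norm_integral_le_integral_norm ha'b.le
  -- ofReal ε ≤ J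
  have hεJ : ENNReal.ofReal ε ≤ J := by
    have h1 : ∫ x in a'..b, ‖deriv γ x‖ = ∫ x in Set.Ioc a' b, ‖deriv γ x‖ :=
      intervalIntegral.integral_of_le ha'b.le
    have h2 : ENNReal.ofReal (∫ x in Set.Ioc a' b, ‖deriv γ x‖) =
        ∫⁻ x in Set.Ioc a' b, ENNReal.ofReal ‖deriv γ x‖ :=
      MeasureTheory.ofReal_integral_eq_lintegral_ofReal hintIoc.norm
        (Filter.Eventually.of_forall (fun x => norm_nonneg _))
    have h3 : (∫⁻ x in Set.Ioc a' b, ENNReal.ofReal ‖deriv γ x‖) = J := by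
      rw [hJdef]
      exact MeasureTheory.setLIntegral_congr (MeasureTheory.Ioo_ae_eq_Ioc (a := a') (b := b)).symm
    calc ENNReal.ofReal ε ≤ ENNReal.ofReal (∫ x in a'..b, ‖deriv γ x‖) :=
      ENNReal.ofReal_le_ofReal hnormint
    _ = J := by rw [h1, h2, h3]
  -- lower bound on I
  have hlow : ENNReal.ofReal (c₀ ^ (-μ)) * ENNReal.ofReal ε ≤ I := by
    have step : ∫⁻ t in Set.Ioo a' b, ENNReal.ofReal (c₀ ^ (-μ)) * ENNReal.ofReal ‖deriv γ t‖ ≤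
        ∫⁻ t in Set.Ioo a' b, ENNReal.ofReal (‖h (γ t)‖ ^ (-μ) * ‖deriv γ t‖) := by
      refine MeasureTheory.lintegral_mono_ae ?_
      refine (MeasureTheory.ae_restrict_iff' measurableSet_Ioo).mpr (Filter.Eventually.of_forall ?_)
      intro t ht
      rw [← ENNReal.ofReal_mul (le_of_lt (Real.rpow_pos_of_pos hc₀0 (-μ)))]
      exact ENNReal.ofReal_le_ofReal (hkey t ht).1
    rw [MeasureTheory.lintegral_const_mul' _ _ ENNReal.ofReal_ne_top] at step
    exact le_trans (mul_le_mul_right hεJ _) (le_trans step hIJ)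
  -- final contradiction
  have hfin : c₀ ^ (-μ) * ε ≤ I.toReal := by
    rw [← ENNReal.ofReal_mul (le_of_lt (Real.rpow_pos_of_pos hc₀0 (-μ)))] at hlow
    exact (ENNReal.ofReal_le_iff_le_toReal hIne).mp hlow
  have hcompute : c₀ ^ (-μ) * ε = (2 * M) ^ (-μ) * ε ^ (1 - μ) := by
    have hc₀eq : c₀ = (2 * M) * ε := by rw [hc₀def]; ring
    rw [hc₀eq, Real.mul_rpow (by linarith : (0:ℝ) ≤ 2 * M) hε0.le, mul_assoc]
    congr 1
    rw [show (1:ℝ) - μ = -μ + 1 by ring, Real.rpow_add hε0, Real.rpow_one]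
  have hbig2 : I.toReal + 1 ≤ (2 * M) ^ (-μ) * ε ^ (1 - μ) := by
    have hp : 0 < (2 * M : ℝ) ^ (-μ) := Real.rpow_pos_of_pos (by linarith) _
    have hq : (2 * M : ℝ) ^ (-μ) * (2 * M) ^ μ = 1 := by
      rw [← Real.rpow_add (by linarith : (0:ℝ) < 2 * M)]; simp
    have hAeq : A = (2 * M) ^ μ * (I.toReal + 1) := hAdef
    have hm := mul_le_mul_of_nonneg_left hεpow hp.le
    have h1 : (2 * M : ℝ) ^ (-μ) * (A + 1) = (I.toReal + 1) + (2 * M) ^ (-μ) := by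
      rw [hAeq, mul_add, ← mul_assoc, hq, one_mul, mul_one]
    linarith
  rw [hcompute] at hfin
  linarith
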